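/- Let Δ = Δ(κ) ⊂ ℝⁿ be a smooth polytope, let H ∈ ℤⁿ and κ_{N+1}, κ_{N+2} ∈ ℝ, and suppose the bundle polytope Δ' ⊂ ℝ^{n+1} over the 1-simplex determined by (H, κ_{N+1}, κ_{N+2}) is combinatorially a product. If Δ' is monotone (i.e. Δ' is integral and there exists u₀ ∈ ℤ^{n+1} such that the support number of each of the N+2 facets of Δ' relative to u₀ equals 1), then either H = 0 or H = η_j for some j ∈ {1,…,N}. -/

import Mathlib

open MeasureTheory Finset
open scoped Pointwise Classical

noncomputable section

namespace ToricStmt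

/-- Euclidean `n`-space. -/
abbrev E (n : ℕ) : Type := EuclideanSpace ℝ (Fin n)

/-- The real vector associated to an integer vector. -/
def iv {n : ℕ} (g : Fin n → ℤ) : E n := WithLp.toLp 2 (fun t => (g t : ℝ))

/-- The standard pairing/dot product. -/
def dot {n : ℕ} (u v : E n) : ℝ := ∑ i, u i * v i

/-- An integer vector is primitive if the gcd of its coordinates is `1`. -/
def IsPrimitive {n : ℕ} (g : Fin n → ℤ) : Prop := Finset.univ.gcd g = 1

/-- The polytope `Δ(κ) = {x : ⟨η i, x⟩ ≤ κ i for all i}`. -/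
def Delta {n N : ℕ} (η : Fin N → Fin n → ℤ) (κ : Fin N → ℝ) : Set (E n) :=
  {x | ∀ i, dot (iv (η i)) x ≤ κ i}

/-- The face `F_I(κ)` of `Δ(κ)`. -/
def Face {n N : ℕ} (η : Fin N → Fin n → ℤ) (κ : Fin N → ℝ) (I : Finset (Fin N)) :
    Set (E n) :=
  {x | x ∈ Delta η κ ∧ ∀ i ∈ I, dot (iv (η i)) x = κ i}

/-- A vertex of `Δ(κ)` is a point which is a face. -/
def IsVertex {n N : ℕ} (η : Fin N → Fin n → ℤ) (κ : Fin N → ℝ) (x : E n) : Prop :=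
  ∃ I : Finset (Fin N), Face η κ I = {x}

/-- The dimension of (the affine hull of) a subset of `E n`. -/
def faceDim {n : ℕ} (F : Set (E n)) : ℕ := Module.finrank ℝ (vectorSpan ℝ F)

/-- The set of constraints active at `x`. -/
def activeIdx {n N : ℕ} (η : Fin N → Fin n → ℤ) (κ : Fin N → ℝ) (x : E n) :
    Finset (Fin N) :=
  Finset.univ.filter fun i => dot (iv (η i)) x = κ i

/-- `Δ(κ)` is a smooth polytope: compact with nonempty interior, all facets of
dimension `n - 1`, and at each vertex exactly `n` facets meet, whose conormals form a
`ℤ`-basis of `ℤⁿ`. -/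
def IsSmoothPolytope {n N : ℕ} (η : Fin N → Fin n → ℤ) (κ : Fin N → ℝ) : Prop :=
  IsCompact (Delta η κ) ∧ (interior (Delta η κ)).Nonempty ∧
  (∀ i, faceDim (Face η κ {i}) = n - 1) ∧
  ∀ x, IsVertex η κ x →
    (activeIdx η κ x).card = n ∧
    Submodule.span ℤ (↑((activeIdx η κ x).image η) : Set (Fin n → ℤ)) = ⊤

/-- A chamber neighbourhood of `κ`: an open connected set of support constants containing
`κ` on which the polytope stays smooth with the same combinatorics. -/
def IsChamberNbhd {n N : ℕ} (η : Fin N → Fin n → ℤ) (κ : Fin N → ℝ)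
    (U : Set (Fin N → ℝ)) : Prop :=
  IsOpen U ∧ IsConnected U ∧ κ ∈ U ∧
  ∀ κ' ∈ U, IsSmoothPolytope η κ' ∧
    ∀ I : Finset (Fin N), ((Face η κ' I).Nonempty ↔ (Face η κ I).Nonempty)

/-- The barycenter of `Δ(κ)` with respect to Lebesgue measure. -/
def bary {n N : ℕ} (η : Fin N → Fin n → ℤ) (κ : Fin N → ℝ) : E n :=
  (volume (Delta η κ)).toReal⁻¹ • ∫ x in Delta η κ, x

/-- `H` is mass linear on `U` with coefficients `γ`. -/
def MassLinearOn {n N : ℕ} (η : Fin N → Fin n → ℤ) (H : E n)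
    (U : Set (Fin N → ℝ)) (γ : Fin N → ℝ) : Prop :=
  ∀ κ' ∈ U, dot H (bary η κ') = ∑ i, γ i * κ' i

/-- `v` and `w` are the two endpoints of an edge (a one-dimensional face) of `Δ(κ)`. -/
def IsEdgeBetween {n N : ℕ} (η : Fin N → Fin n → ℤ) (κ : Fin N → ℝ)
    (v w : E n) : Prop :=
  v ≠ w ∧ IsVertex η κ v ∧ IsVertex η κ w ∧
  ∃ I : Finset (Fin N), Face η κ I = segment ℝ v w

/-- All vertices of `Δ(κ)` are lattice points. -/
def IsIntegral {n N : ℕ} (η : Fin N → Fin n → ℤ) (κ : Fin N → ℝ) : Prop :=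
  ∀ x, IsVertex η κ x → ∀ t, ∃ m : ℤ, x t = (m : ℝ)

/-- `Δ(κ)` is monotone: integral, and some lattice point has affine distance `1` to
every facet. -/
def IsMonotonePoly {n N : ℕ} (η : Fin N → Fin n → ℤ) (κ : Fin N → ℝ) : Prop :=
  IsIntegral η κ ∧ ∃ u₀ : Fin n → ℤ, ∀ i, κ i - dot (iv (η i)) (iv u₀) = 1

/-- Conormals of the bundle polytope over the `1`-simplex determined by `H`:
the prolonged fiber conormals `(η i, 0)`, then `(0, -1)`, then `(H, 1)`. -/
def bunEta1 {n N : ℕ} (η : Fin N → Fin n → ℤ) (H : Fin n → ℤ) :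
    Fin (N + 2) → Fin (n + 1) → ℤ := fun j t =>
  if hj : (j : ℕ) < N then (if ht : (t : ℕ) < n then η ⟨j, hj⟩ ⟨t, ht⟩ else 0)
  else if (j : ℕ) = N then (if (t : ℕ) = n then -1 else 0)
  else (if ht : (t : ℕ) < n then H ⟨t, ht⟩ else 1)

/-- Support constants of the bundle polytope over the `1`-simplex. -/
def bunKappa1 {N : ℕ} (κ : Fin N → ℝ) (κ1 κ2 : ℝ) : Fin (N + 2) → ℝ := fun j =>
  if hj : (j : ℕ) < N then κ ⟨j, hj⟩ else if (j : ℕ) = N then κ1 else κ2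

/-- The index of the bottom facet `F'_{N+1}`. -/
def idxB {N : ℕ} : Fin (N + 2) := ⟨N, by omega⟩

/-- The index of the top facet `F'_{N+2}`. -/
def idxT {N : ℕ} : Fin (N + 2) := ⟨N + 1, by omega⟩

/-- The bundle polytope over the `1`-simplex is combinatorially a product: it is a
compact smooth polytope, top and bottom facets are disjoint, and for every
`I ⊆ {1,…,N}` the faces `F'_I ∩ F'_{N+1}`, `F_I` and `F'_I ∩ F'_{N+2}` are
simultaneously nonempty or empty. -/
def CombProd1 {n N : ℕ} (η : Fin N → Fin n → ℤ) (κ : Fin N → ℝ)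
    (H : Fin n → ℤ) (κ1 κ2 : ℝ) : Prop :=
  IsSmoothPolytope (bunEta1 η H) (bunKappa1 κ κ1 κ2) ∧
  Face (bunEta1 η H) (bunKappa1 κ κ1 κ2) {idxB, idxT} = ∅ ∧
  ∀ I : Finset (Fin N),
    ((Face (bunEta1 η H) (bunKappa1 κ κ1 κ2)
        (insert idxB (I.image (Fin.castAdd 2)))).Nonempty ↔ (Face η κ I).Nonempty) ∧
    ((Face (bunEta1 η H) (bunKappa1 κ κ1 κ2)
        (insert idxT (I.image (Fin.castAdd 2)))).Nonempty ↔ (Face η κ I).Nonempty)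

-- ===== helper lemmas =====

lemma E_sum_apply {n : ℕ} {ι : Type*} (s : Finset ι) (f : ι → E n) (i : Fin n) :
    (∑ x ∈ s, f x) i = ∑ x ∈ s, f x i := by
  induction s using Finset.cons_induction with
  | empty => rfl
  | cons a s ha ih => rw [Finset.sum_cons, Finset.sum_cons, ← ih]; rfl

lemma dot_add_right {n : ℕ} (u v w : E n) : dot u (v + w) = dot u v + dot u w := by
  simp only [dot]
  rw [← Finset.sum_add_distrib]
  refine Finset.sum_congr rfl fun i _ => ?_
  show u i * (v i + w i) = _
  ring

lemma dot_smul_right {n : ℕ} (c : ℝ) (u v : E n) : dot u (c • v) = c * dot u v := by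
  simp only [dot, Finset.mul_sum]
  refine Finset.sum_congr rfl fun i _ => ?_
  show u i * (c * v i) = _
  ring

lemma dot_sum_left {n : ℕ} {ι : Type*} (s : Finset ι) (a : ι → ℝ) (f : ι → E n) (v : E n) :
    dot (∑ i ∈ s, a i • f i) v = ∑ i ∈ s, a i * dot (f i) v := by
  simp only [dot, E_sum_apply, Finset.mul_sum, Finset.sum_mul]
  rw [Finset.sum_comm]
  refine Finset.sum_congr rfl fun i _ => Finset.sum_congr rfl fun j _ => ?_
  simp only [PiLp.smul_apply, smul_eq_mul]
  ring

lemma dot_eq_inner {n : ℕ} (u v : E n) : dot u v = inner ℝ u v := by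
  simp only [dot, PiLp.inner_apply, RCLike.inner_apply, starRingEnd_apply, star_trivial]
  try exact Finset.sum_congr rfl fun i _ => mul_comm _ _

lemma continuous_dot {n : ℕ} (u : E n) : Continuous (dot u) := by
  unfold dot
  exact continuous_finset_sum _ fun i _ =>
    (continuous_const.mul ((continuous_apply i).comp (PiLp.continuous_ofLp 2 _)))

/-- epsilon extraction -/
lemma exists_eps {N : ℕ} (t : Finset (Fin N)) (f s : Fin N → ℝ) (hs : ∀ i ∈ t, 0 < s i) :
    ∃ ε : ℝ, 0 < ε ∧ ∀ i ∈ t, ε * |f i| ≤ s i := by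
  refine ⟨(insert (1:ℝ) (t.image fun i => s i / (|f i| + 1))).min'
    (Finset.insert_nonempty _ _), ?_, ?_⟩
  · rw [Finset.lt_min'_iff]
    intro y hy
    rcases Finset.mem_insert.mp hy with h | h
    · rw [h]; norm_num
    · obtain ⟨i, hi, rfl⟩ := Finset.mem_image.mp h
      have := hs i hi
      positivity
  · intro i hi
    have hmin : (insert (1:ℝ) (t.image fun i => s i / (|f i| + 1))).min'
        (Finset.insert_nonempty _ _) ≤ s i / (|f i| + 1) :=
      Finset.min'_le _ _ (Finset.mem_insert_of_mem (Finset.mem_image_of_mem _ hi))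
    have h1 : (insert (1:ℝ) (t.image fun i => s i / (|f i| + 1))).min'
        (Finset.insert_nonempty _ _) * |f i| ≤ (s i / (|f i| + 1)) * |f i| :=
      mul_le_mul_of_nonneg_right hmin (abs_nonneg _)
    refine h1.trans ?_
    rw [div_mul_eq_mul_div, div_le_iff₀ (by positivity)]
    nlinarith [abs_nonneg (f i), hs i hi]

/-- perturbation staying in Delta -/
lemma delta_step {n N : ℕ} (η : Fin N → Fin n → ℤ) (κ : Fin N → ℝ) (z : E n)
    (hz : z ∈ Delta η κ) (w : E n)
    (hw : ∀ i ∈ activeIdx η κ z, dot (iv (η i)) w ≤ 0) :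
    ∃ ε : ℝ, 0 < ε ∧ ∀ ε' : ℝ, 0 < ε' → ε' ≤ ε → z + ε' • w ∈ Delta η κ := by
  have hpos : ∀ i ∈ (Finset.univ : Finset (Fin N)).filter (fun i => i ∉ activeIdx η κ z),
      0 < κ i - dot (iv (η i)) z := by
    intro i hi
    have hle := hz i
    have hne : dot (iv (η i)) z ≠ κ i := by
      intro h
      exact (Finset.mem_filter.mp hi).2 (Finset.mem_filter.mpr ⟨Finset.mem_univ _, h⟩)
    have := lt_of_le_of_ne hle hne
    linarith
  obtain ⟨ε, hε, hεle⟩ := exists_eps ((Finset.univ : Finset (Fin N)).filter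
      fun i => i ∉ activeIdx η κ z)
    (fun i => dot (iv (η i)) w) (fun i => κ i - dot (iv (η i)) z) hpos
  · refine ⟨ε, hε, fun ε' hε' hε'ε i => ?_⟩
    rw [dot_add_right, dot_smul_right]
    by_cases hi : i ∈ activeIdx η κ z
    · have h1 := hw i hi
      have h2 := hz i
      nlinarith
    · have h3 := hεle i (Finset.mem_filter.mpr ⟨Finset.mem_univ _, hi⟩)
      have h4 : ε' * dot (iv (η i)) w ≤ ε * |dot (iv (η i)) w| := by
        calc ε' * dot (iv (η i)) w ≤ ε' * |dot (iv (η i)) w| := by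
              exact mul_le_mul_of_nonneg_left (le_abs_self _) hε'.le
          _ ≤ ε * |dot (iv (η i)) w| := by
              exact mul_le_mul_of_nonneg_right hε'ε (abs_nonneg _)
      linarith


lemma dot_bun_castAdd {n N : ℕ} (η : Fin N → Fin n → ℤ) (H : Fin n → ℤ) (i : Fin N)
    (p : E (n+1)) :
    dot (iv (bunEta1 η H (Fin.castAdd 2 i))) p
      = dot (iv (η i)) (WithLp.toLp 2 (fun r => p (Fin.castSucc r))) := by
  unfold dot
  rw [Fin.sum_univ_castSucc]
  have hlast : iv (bunEta1 η H (Fin.castAdd 2 i)) (Fin.last n) = 0 := by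
    simp [iv, bunEta1, Fin.is_lt]
  rw [hlast, zero_mul, add_zero]
  refine Finset.sum_congr rfl fun r _ => ?_
  have hc : iv (bunEta1 η H (Fin.castAdd 2 i)) (Fin.castSucc r) = iv (η i) r := by
    simp [iv, bunEta1, Fin.is_lt, Fin.eta]
  rw [hc]

lemma dot_bun_idxB {n N : ℕ} (η : Fin N → Fin n → ℤ) (H : Fin n → ℤ) (p : E (n+1)) :
    dot (iv (bunEta1 η H idxB)) p = -(p (Fin.last n)) := by
  unfold dot
  rw [Fin.sum_univ_castSucc]
  have hlast : iv (bunEta1 η H (idxB (N := N))) (Fin.last n) = -1 := by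
    simp [iv, bunEta1, idxB]
  have hz : ∀ r : Fin n, iv (bunEta1 η H (idxB (N := N))) (Fin.castSucc r) = 0 := by
    intro r
    have hrn : (r : ℕ) ≠ n := Nat.ne_of_lt r.is_lt
    simp [iv, bunEta1, idxB, Fin.coe_castSucc, hrn]
  rw [hlast]
  rw [Finset.sum_congr rfl fun r _ => by rw [hz r, zero_mul]]
  simp

lemma dot_bun_idxT {n N : ℕ} (η : Fin N → Fin n → ℤ) (H : Fin n → ℤ) (p : E (n+1)) :
    dot (iv (bunEta1 η H idxT)) p
      = dot (iv H) (WithLp.toLp 2 (fun r => p (Fin.castSucc r))) + p (Fin.last n) := by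
  unfold dot
  rw [Fin.sum_univ_castSucc]
  have h1 : ¬ ((idxT (N := N) : ℕ) < N) := by simp [idxT]
  have h2 : ¬ ((idxT (N := N) : ℕ) = N) := by simp [idxT]
  have hlast : iv (bunEta1 η H (idxT (N := N))) (Fin.last n) = 1 := by
    simp [iv, bunEta1, h1, h2]
  have hc : ∀ r : Fin n, iv (bunEta1 η H (idxT (N := N))) (Fin.castSucc r) = iv H r := by
    intro r
    simp [iv, bunEta1, h1, h2, Fin.is_lt, Fin.eta]
  rw [hlast, one_mul]
  congr 1
  exact Finset.sum_congr rfl fun r _ => by rw [hc r]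

lemma bunKappa_castAdd {N : ℕ} (κ : Fin N → ℝ) (κ1 κ2 : ℝ) (i : Fin N) :
    bunKappa1 κ κ1 κ2 (Fin.castAdd 2 i) = κ i := by
  simp [bunKappa1, Fin.is_lt, Fin.eta]

lemma bunKappa_idxB {N : ℕ} (κ : Fin N → ℝ) (κ1 κ2 : ℝ) :
    bunKappa1 κ κ1 κ2 idxB = κ1 := by
  simp [bunKappa1, idxB]

lemma bunKappa_idxT {N : ℕ} (κ : Fin N → ℝ) (κ1 κ2 : ℝ) :
    bunKappa1 κ κ1 κ2 idxT = κ2 := by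
  simp [bunKappa1, idxT]


-- ===== auxiliary lemmas =====

lemma dot_sub_right {n : ℕ} (u v w : E n) : dot u (v - w) = dot u v - dot u w := by
  simp only [dot, ← Finset.sum_sub_distrib]
  refine Finset.sum_congr rfl fun i _ => ?_
  show u i * (v i - w i) = _
  ring

lemma face_active_eq_singleton {n N : ℕ} (η : Fin N → Fin n → ℤ) (κ : Fin N → ℝ)
    (v : E n) (hvΔ : v ∈ Delta η κ)
    (hext : ∀ y ∈ Delta η κ, ∀ z ∈ Delta η κ, v ∈ openSegment ℝ y z → y = v ∧ z = v) :
    Face η κ (activeIdx η κ v) = {v} := by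
  ext y
  simp only [Set.mem_singleton_iff]
  constructor
  · intro hy
    by_contra hne
    have hdy : ∀ i ∈ activeIdx η κ v, dot (iv (η i)) (v - y) = 0 := by
      intro i hi
      rw [dot_sub_right, (Finset.mem_filter.mp hi).2, hy.2 i hi, sub_self]
    have hdy' : ∀ i ∈ activeIdx η κ v, dot (iv (η i)) (y - v) = 0 := by
      intro i hi
      rw [dot_sub_right, (Finset.mem_filter.mp hi).2, hy.2 i hi, sub_self]
    obtain ⟨ε₁, hε₁, hmem₁⟩ := delta_step η κ v hvΔ (v - y) (fun i hi => le_of_eq (hdy i hi))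
    obtain ⟨ε₂, hε₂, hmem₂⟩ := delta_step η κ v hvΔ (y - v) (fun i hi => le_of_eq (hdy' i hi))
    have hεpos : 0 < min ε₁ ε₂ := lt_min hε₁ hε₂
    have hq : v + min ε₁ ε₂ • (v - y) ∈ Delta η κ := hmem₁ _ hεpos (min_le_left _ _)
    have hp : v + min ε₁ ε₂ • (y - v) ∈ Delta η κ := hmem₂ _ hεpos (min_le_right _ _)
    have hseg : v ∈ openSegment ℝ (v + min ε₁ ε₂ • (y - v)) (v + min ε₁ ε₂ • (v - y)) := by
      refine ⟨1/2, 1/2, by norm_num, by norm_num, by norm_num, ?_⟩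
      module
    have hqq := (hext _ hp _ hq hseg).2
    have : min ε₁ ε₂ • (v - y) = 0 := by
      have := congrArg (fun z => z - v) hqq
      simpa [add_sub_cancel_left] using this
    rcases smul_eq_zero.mp this with h | h
    · exact absurd h (ne_of_gt hεpos)
    · exact hne (sub_eq_zero.mp h).symm
  · intro h
    subst h
    exact ⟨hvΔ, fun i hi => (Finset.mem_filter.mp hi).2⟩

lemma exists_max_vertex {n N : ℕ} (η : Fin N → Fin n → ℤ) (κ : Fin N → ℝ)
    (hcomp : IsCompact (Delta η κ)) (hne : (Delta η κ).Nonempty) (Hv : E n) :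
    ∃ v ∈ Delta η κ, Face η κ (activeIdx η κ v) = {v} ∧
      ∀ y ∈ Delta η κ, dot Hv y ≤ dot Hv v := by
  obtain ⟨x₀, hx₀, hmax⟩ := hcomp.exists_isMaxOn hne (continuous_dot Hv).continuousOn
  set A := Delta η κ ∩ {x | dot Hv x = dot Hv x₀} with hA
  have hAcomp : IsCompact A :=
    hcomp.inter_right (isClosed_eq (continuous_dot Hv) continuous_const)
  obtain ⟨v, hv⟩ := hAcomp.extremePoints_nonempty ⟨x₀, hx₀, rfl⟩
  obtain ⟨⟨hvΔ, hvM⟩, hkey⟩ := hv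
  have hvM' : dot Hv v = dot Hv x₀ := hvM
  have hextΔ : ∀ y ∈ Delta η κ, ∀ z ∈ Delta η κ, v ∈ openSegment ℝ y z → y = v ∧ z = v := by
    intro y hy z hz hseg
    obtain ⟨a, b, ha, hb, hab, habv⟩ := hseg
    have hval : a * dot Hv y + b * dot Hv z = dot Hv x₀ := by
      rw [← hvM', ← habv, dot_add_right, dot_smul_right, dot_smul_right]
    have hy1 : dot Hv y ≤ dot Hv x₀ := hmax hy
    have hz1 : dot Hv z ≤ dot Hv x₀ := hmax hz
    have h5 : a * dot Hv x₀ + b * dot Hv x₀ = dot Hv x₀ := by rw [← add_mul, hab, one_mul]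
    have h3 : b * dot Hv z ≤ b * dot Hv x₀ := mul_le_mul_of_nonneg_left hz1 hb.le
    have h3' : a * dot Hv y ≤ a * dot Hv x₀ := mul_le_mul_of_nonneg_left hy1 ha.le
    have hy2 : dot Hv y = dot Hv x₀ := by
      have h4 : a * dot Hv x₀ ≤ a * dot Hv y := by linarith
      have := le_of_mul_le_mul_left h4 ha
      linarith
    have hz2 : dot Hv z = dot Hv x₀ := by
      have h4 : b * dot Hv x₀ ≤ b * dot Hv z := by linarith
      have := le_of_mul_le_mul_left h4 hb
      linarith
    exact ⟨hkey ⟨hy, hy2⟩ ⟨hz, hz2⟩ ⟨a, b, ha, hb, hab, habv⟩,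
      hkey ⟨hz, hz2⟩ ⟨hy, hy2⟩ ⟨b, a, hb, ha, by linarith, by rw [add_comm]; exact habv⟩⟩
  refine ⟨v, hvΔ, face_active_eq_singleton η κ v hvΔ hextΔ, fun y hy => ?_⟩
  calc dot Hv y ≤ dot Hv x₀ := hmax hy
    _ = dot Hv v := hvM'.symm


/-- If the bundle polytope over the `1`-simplex determined by
`(H, κ_{N+1}, κ_{N+2})` is combinatorially a product and is monotone, then either
`H = 0` or `H = η_j` for some facet conormal `η_j` of the fiber. -/
theorem stmt10 {n N : ℕ} (hn : 1 ≤ n) (hN : n + 1 ≤ N)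
    (η : Fin N → Fin n → ℤ) (hprim : ∀ i, IsPrimitive (η i))
    (κ : Fin N → ℝ) (hsm : IsSmoothPolytope η κ)
    (H : Fin n → ℤ) (κ1 κ2 : ℝ)
    (hcomb : CombProd1 η κ H κ1 κ2)
    (hmono : IsMonotonePoly (bunEta1 η H) (bunKappa1 κ κ1 κ2)) :
    H = 0 ∨ ∃ j : Fin N, H = η j := by
  classical
  -- extract the monotone data
  obtain ⟨_hint, u₀, hu₀⟩ := hmono
  set u : Fin n → ℤ := fun r => u₀ (Fin.castSucc r) with hu
  have hκeq : ∀ i : Fin N, κ i - dot (iv (η i)) (iv u) = 1 := by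
    intro i
    have h := hu₀ (Fin.castAdd 2 i)
    rw [dot_bun_castAdd, bunKappa_castAdd] at h
    have hfun : WithLp.toLp 2 (fun r => iv u₀ (Fin.castSucc r)) = iv u := rfl
    rw [hfun] at h
    exact h
  have hκ1 : κ1 + (u₀ (Fin.last n) : ℝ) = 1 := by
    have h := hu₀ idxB
    rw [dot_bun_idxB, bunKappa_idxB] at h
    have : iv u₀ (Fin.last n) = (u₀ (Fin.last n) : ℝ) := rfl
    rw [this] at h
    linarith
  have hκ2 : κ2 - dot (iv H) (iv u) - (u₀ (Fin.last n) : ℝ) = 1 := by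
    have h := hu₀ idxT
    rw [dot_bun_idxT, bunKappa_idxT] at h
    have hfun : WithLp.toLp 2 (fun r => iv u₀ (Fin.castSucc r)) = iv u := rfl
    have hl : iv u₀ (Fin.last n) = (u₀ (Fin.last n) : ℝ) := rfl
    rw [hfun, hl] at h
    linarith
  have hκsum : κ1 + κ2 = 2 + dot (iv H) (iv u) := by linarith
  -- a vertex maximizing ⟨H, ·⟩
  have hΔne : (Delta η κ).Nonempty := by
    obtain ⟨z, hz⟩ := hsm.2.1
    exact ⟨z, interior_subset hz⟩
  obtain ⟨v, hvΔ, hface, hmax⟩ := exists_max_vertex η κ hsm.1 hΔne (iv H)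
  have hvert : IsVertex η κ v := ⟨_, hface⟩
  obtain ⟨hcard, hspan⟩ := hsm.2.2.2 v hvert
  set act := activeIdx η κ v with hactdef
  -- the conormals at v span ℝⁿ
  have hRspan : ⊤ ≤ Submodule.span ℝ (Set.range fun i : {i // i ∈ act} => iv (η i.1)) := by
    set S := Submodule.span ℝ (Set.range fun i : {i // i ∈ act} => iv (η i.1)) with hS
    have hgen : ∀ g : Fin n → ℤ, iv g ∈ S := by
      intro g
      have hg : g ∈ Submodule.span ℤ (↑(act.image η) : Set (Fin n → ℤ)) := by
        rw [hspan]; trivial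
      refine Submodule.span_induction ?_ ?_ ?_ ?_ hg
        (p := fun g _ => iv g ∈ S)
      · intro g' hg'
        obtain ⟨i, hi, rfl⟩ := Finset.mem_image.mp hg'
        exact Submodule.subset_span ⟨⟨i, hi⟩, rfl⟩
      · show iv 0 ∈ S
        have : iv (0 : Fin n → ℤ) = 0 := by
          ext t
          show ((0 : ℤ) : ℝ) = 0
          norm_num
        rw [this]; exact S.zero_mem
      · intro g₁ g₂ _ _ h₁ h₂
        show iv (g₁ + g₂) ∈ S
        have : iv (g₁ + g₂) = iv g₁ + iv g₂ := by
          ext t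
          show ((g₁ t + g₂ t : ℤ) : ℝ) = _
          push_cast
          rfl
        rw [this]; exact S.add_mem h₁ h₂
      · intro z g' _ h'
        show iv (z • g') ∈ S
        have : iv (z • g') = (z : ℝ) • iv g' := by
          ext t
          show ((z * g' t : ℤ) : ℝ) = _
          push_cast
          rfl
        rw [this]; exact S.smul_mem _ h'
    intro w _
    have hw : w = ∑ t : Fin n, w t • iv (Pi.single t 1) := by
      ext r
      rw [E_sum_apply]
      have : ∀ t : Fin n, (w t • iv (Pi.single t 1)) r = if t = r then w t else 0 := by
        intro t
        rw [PiLp.smul_apply, smul_eq_mul]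
        by_cases h : t = r
        · subst h; simp [iv, Pi.single_apply]
        · simp [iv, Pi.single_apply, h, Ne.symm h]
      rw [Finset.sum_congr rfl fun t _ => this t]
      simp
    rw [hw]
    exact Submodule.sum_mem _ fun t _ => S.smul_mem _ (hgen _)
  have hcardEq : Fintype.card {i // i ∈ act} = Module.finrank ℝ (E n) := by
    rw [Fintype.card_coe, hcard, finrank_euclideanSpace_fin]
  set b := basisOfTopLeSpanOfCardEqFinrank (fun i : {i // i ∈ act} => iv (η i.1))
    hRspan hcardEq with hbdef
  have hb : ∀ i : {i // i ∈ act}, b i = iv (η i.1) := fun i => by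
    rw [hbdef, coe_basisOfTopLeSpanOfCardEqFinrank]
  have hinj : ∀ i ∈ act, ∀ j ∈ act, η i = η j → i = j := by
    intro i hi j hj hij
    have h1 : b ⟨i, hi⟩ = b ⟨j, hj⟩ := by
      rw [hb, hb]
      show iv (η i) = iv (η j)
      rw [hij]
    exact congrArg Subtype.val (b.injective h1)
  -- integer coefficients
  have hHmem : H ∈ Submodule.span ℤ (↑(act.image η) : Set (Fin n → ℤ)) := by
    rw [hspan]; trivial
  obtain ⟨c, -, hc⟩ := Submodule.mem_span_finset.mp hHmem
  have hcact : ∑ i ∈ act, c (η i) • η i = H := by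
    rw [Finset.sum_image hinj] at hc
    exact hc
  have hivH : iv H = ∑ i ∈ act, (c (η i) : ℝ) • iv (η i) := by
    ext t
    rw [E_sum_apply]
    have h1 := congrFun hcact t
    rw [Finset.sum_apply] at h1
    simp only [Pi.smul_apply, smul_eq_mul] at h1
    have h2 : (H t : ℝ) = ∑ i ∈ act, (c (η i) : ℝ) * (η i t : ℝ) := by
      exact_mod_cast congrArg (fun z : ℤ => (z : ℝ)) h1.symm
    refine h2.trans (Finset.sum_congr rfl fun i _ => ?_)
    show _ = ((c (η i) : ℝ) • iv (η i)) t
    rw [PiLp.smul_apply, smul_eq_mul]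
    rfl
  -- nonnegativity of coefficients
  have hnn : ∀ k : {i // i ∈ act}, 0 ≤ c (η k.1) := by
    intro k
    set F : E n →L[ℝ] ℝ := LinearMap.toContinuousLinearMap (b.coord k) with hF
    set w : E n := -(InnerProductSpace.toDual ℝ (E n)).symm F with hwdef
    have hdotw : ∀ i : {i // i ∈ act}, dot (iv (η i.1)) w = -(if i = k then 1 else 0) := by
      intro i
      rw [← hb i, dot_eq_inner]
      rw [real_inner_comm]
      rw [hwdef, inner_neg_left, InnerProductSpace.toDual_symm_apply]
      have : F (b i) = b.coord k (b i) := by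
        rw [hF, LinearMap.coe_toContinuousLinearMap']
      rw [this, Module.Basis.coord_apply, Module.Basis.repr_self, Finsupp.single_apply]
    obtain ⟨ε, hε, hmem⟩ := delta_step η κ v hvΔ w (fun i hi => by
      rw [← hactdef] at hi
      rw [hdotw ⟨i, hi⟩]
      split_ifs <;> norm_num)
    have hq := hmem ε hε le_rfl
    have h1 : dot (iv H) (v + ε • w) ≤ dot (iv H) v := hmax _ hq
    rw [dot_add_right, dot_smul_right] at h1
    have h2 : dot (iv H) w ≤ 0 := by
      by_contra hcon
      push_neg at hcon
      nlinarith
    have h3 : dot (iv H) w = -(c (η k.1) : ℝ) := by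
      rw [hivH, dot_sum_left]
      rw [← Finset.sum_attach act (fun i => (c (η i) : ℝ) * dot (iv (η i)) w)]
      have : ∀ i ∈ act.attach, (c (η i.1) : ℝ) * dot (iv (η i.1)) w
          = if i = k then -(c (η k.1) : ℝ) else 0 := by
        intro i _
        rw [hdotw i]
        split_ifs with h
        · subst h; ring
        · ring
      rw [Finset.sum_congr rfl this, Finset.sum_ite_eq' act.attach k
        (fun _ => -(c (η k.1) : ℝ)), if_pos (Finset.mem_attach _ _)]
    rw [h3] at h2
    have : (0 : ℝ) ≤ (c (η k.1) : ℝ) := by linarith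
    exact_mod_cast this
  -- the sum of the coefficients
  have hMv : dot (iv H) v = ∑ i ∈ act, (c (η i) : ℝ) * κ i := by
    rw [hivH, dot_sum_left]
    refine Finset.sum_congr rfl fun i hi => ?_
    rw [hactdef] at hi
    rw [(Finset.mem_filter.mp hi).2]
  have hMu : dot (iv H) (iv u) = ∑ i ∈ act, (c (η i) : ℝ) * (κ i - 1) := by
    rw [hivH, dot_sum_left]
    refine Finset.sum_congr rfl fun i _ => ?_
    have h := hκeq i
    rw [show dot (iv (η i)) (iv u) = κ i - 1 by linarith]
  have hTsum : dot (iv H) v - dot (iv H) (iv u) = ∑ i ∈ act, (c (η i) : ℝ) := by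
    rw [hMv, hMu, ← Finset.sum_sub_distrib]
    exact Finset.sum_congr rfl fun i _ => by ring
  -- the top face over v
  have hfne : (Face η κ act).Nonempty := ⟨v, by rw [hface]; exact rfl⟩
  obtain ⟨p, hpΔ, hpeq⟩ := ((hcomb.2.2 act).2).mpr hfne
  have hxΔ : (WithLp.toLp 2 (fun r => p (Fin.castSucc r))) ∈ Delta η κ := by
    intro i
    have h := hpΔ (Fin.castAdd 2 i)
    rw [dot_bun_castAdd, bunKappa_castAdd] at h
    exact h
  have hxact : ∀ i ∈ act, dot (iv (η i)) (WithLp.toLp 2 (fun r => p (Fin.castSucc r))) = κ i := by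
    intro i hi
    have h := hpeq (Fin.castAdd 2 i) (Finset.mem_insert_of_mem (Finset.mem_image_of_mem _ hi))
    rw [dot_bun_castAdd, bunKappa_castAdd] at h
    exact h
  have hxv : (WithLp.toLp 2 (fun r => p (Fin.castSucc r))) = v := by
    have hmemf : (WithLp.toLp 2 (fun r => p (Fin.castSucc r))) ∈ Face η κ act := ⟨hxΔ, hxact⟩
    rw [hface] at hmemf
    exact hmemf
  have hup : dot (iv H) v + p (Fin.last n) = κ2 := by
    have h := hpeq idxT (Finset.mem_insert_self _ _)
    rw [dot_bun_idxT, bunKappa_idxT, hxv] at h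
    exact h
  have hdown : -(p (Fin.last n)) ≤ κ1 := by
    have h := hpΔ idxB
    rw [dot_bun_idxB, bunKappa_idxB] at h
    exact h
  have hvle : dot (iv H) v ≤ κ1 + κ2 := by linarith
  -- the integer T
  have hTnn : ∀ i ∈ act, 0 ≤ c (η i) := fun i hi => hnn ⟨i, hi⟩
  have hTle : ((∑ i ∈ act, c (η i) : ℤ) : ℝ) ≤ 2 := by
    push_cast
    rw [← hTsum]
    linarith
  have hTle2 : (∑ i ∈ act, c (η i)) ≤ 2 := by exact_mod_cast hTle
  have hTne : (∑ i ∈ act, c (η i)) ≠ 2 := by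
    intro h2
    have hveq : dot (iv H) v = κ1 + κ2 := by
      have hc2 : ((∑ i ∈ act, c (η i) : ℤ) : ℝ) = 2 := by exact_mod_cast congrArg (fun z : ℤ => (z : ℝ)) h2
      push_cast at hc2
      rw [← hTsum] at hc2
      linarith
    have hplast : p (Fin.last n) = -κ1 := by linarith
    have hpBT : p ∈ Face (bunEta1 η H) (bunKappa1 κ κ1 κ2) ({idxB, idxT} : Finset (Fin (N+2))) := by
      refine ⟨hpΔ, ?_⟩
      intro j hj
      rcases Finset.mem_insert.mp hj with h | h
      · rw [h, dot_bun_idxB, bunKappa_idxB, hplast]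
        ring
      · rw [Finset.mem_singleton.mp h, dot_bun_idxT, bunKappa_idxT, hxv]
        exact hup
    have hfe := hcomb.2.1
    rw [Set.eq_empty_iff_forall_notMem] at hfe
    exact hfe p hpBT
  have hT0 : 0 ≤ ∑ i ∈ act, c (η i) := Finset.sum_nonneg hTnn
  have hT01 : (∑ i ∈ act, c (η i)) = 0 ∨ (∑ i ∈ act, c (η i)) = 1 := by omega
  rcases hT01 with h0 | h1
  · left
    have hall := (Finset.sum_eq_zero_iff_of_nonneg hTnn).mp h0
    rw [← hcact]
    exact Finset.sum_eq_zero fun i hi => by rw [hall i hi, zero_smul]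
  · right
    have hex : ∃ i₀ ∈ act, 1 ≤ c (η i₀) := by
      by_contra hcon
      push_neg at hcon
      have : (∑ i ∈ act, c (η i)) = 0 :=
        Finset.sum_eq_zero fun i hi => by
          have := hcon i hi
          have := hTnn i hi
          omega
      omega
    obtain ⟨i₀, hi₀, hge⟩ := hex
    have herase : ∑ i ∈ act.erase i₀, c (η i) + c (η i₀) = ∑ i ∈ act, c (η i) :=
      Finset.sum_erase_add act _ hi₀
    have hrpos : 0 ≤ ∑ i ∈ act.erase i₀, c (η i) :=
      Finset.sum_nonneg fun i hi => hTnn i (Finset.mem_of_mem_erase hi)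
    have hci₀ : c (η i₀) = 1 := by omega
    have hsum0 : ∑ i ∈ act.erase i₀, c (η i) = 0 := by omega
    have hzer : ∀ j ∈ act, j ≠ i₀ → c (η j) = 0 := by
      intro j hj hnej
      exact (Finset.sum_eq_zero_iff_of_nonneg fun i hi =>
        hTnn i (Finset.mem_of_mem_erase hi)).mp hsum0 j (Finset.mem_erase.mpr ⟨hnej, hj⟩)
    refine ⟨i₀, ?_⟩
    rw [← hcact]
    rw [Finset.sum_eq_single_of_mem i₀ hi₀ fun j hj hnej => by rw [hzer j hj hnej, zero_smul]]
    rw [hci₀, one_smul]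


end ToricStmt
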